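/- There exists a real number β₀ with 0 < β₀ < 1/3 such that the following holds for every β ∈ [β₀, 1/3]: there is no pair of functions u, v : {1,2,3,4} → 𝕋 satisfying the three equations (1−β)/3 · (u(1)+u(2)+u(3)) + β·u(4) = 0, (1−β)/3 · (v(1)+v(2)+v(3)) + β·v(4) = 0, and (1−β)/3 · (u(1)·conj(v(1)) + u(2)·conj(v(2)) + u(3)·conj(v(3))) + β·u(4)·conj(v(4)) = 0. -/

import Mathlib

set_option maxHeartbeats 1000000

lemma pairhelp (a b c : ℝ) (hab : 0 ≤ a*b) (la : 2/5 < a^2) (lb : 2/5 < b^2)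
    (h : a+b+c = 0) (uc : c^2 ≤ 1) : False := by
  have h1 : 4/25 < (a*b)^2 := by nlinarith
  have h2 : 2/5 < a*b := by nlinarith
  have hc : c = -(a+b) := by linarith
  rw [hc] at uc
  nlinarith

lemma tri (q0 q1 q2 : ℝ) (h0 : q0+q1+q2 = 0)
    (l0 : 2/5 < q0^2) (l1 : 2/5 < q1^2) (l2 : 2/5 < q2^2)
    (u0 : q0^2 ≤ 1) (u1 : q1^2 ≤ 1) (u2 : q2^2 ≤ 1) : False := by
  rcases le_or_gt q0 0 with s0 | s0 <;> rcases le_or_gt q1 0 with s1 | s1 <;>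
    rcases le_or_gt q2 0 with s2 | s2
  · exact pairhelp q0 q1 q2 (by nlinarith) l0 l1 h0 u2
  · exact pairhelp q0 q1 q2 (by nlinarith) l0 l1 h0 u2
  · exact pairhelp q0 q2 q1 (by nlinarith) l0 l2 (by linarith) u1
  · exact pairhelp q1 q2 q0 (mul_nonneg s1.le s2.le) l1 l2 (by linarith) u0
  · exact pairhelp q1 q2 q0 (by nlinarith) l1 l2 (by linarith) u0
  · exact pairhelp q0 q2 q1 (mul_nonneg s0.le s2.le) l0 l2 (by linarith) u1
  · exact pairhelp q0 q1 q2 (mul_nonneg s0.le s1.le) l0 l1 h0 u2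
  · exact pairhelp q0 q1 q2 (mul_nonneg s0.le s1.le) l0 l1 h0 u2

lemma onept' (p q x y : ℝ) (ha : p^2+q^2 = 1)
    (hid2 : p + 1/2 = x*(1+p)+y*q - (x^2+y^2)/2)
    (ht : x^2+y^2 ≤ 3/500) : 2/5 < q^2 := by
  have hpl : p ≤ 1 := by nlinarith [sq_nonneg q]
  have ht0 : 0 ≤ x^2 + y^2 := by positivity
  have hid : (x*(1+p) + y*q)^2 + (x*q - y*(1+p))^2 = (x^2+y^2) * (2+2*p) := by
    linear_combination (x^2+y^2) * ha
  have hu : (x*(1+p) + y*q)^2 ≤ 4*(x^2+y^2) := by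
    nlinarith [sq_nonneg (x*q - y*(1+p))]
  have he2 : (p + 1/2)^2 ≤ 2*(x*(1+p)+y*q)^2 + (x^2+y^2)^2/2 := by
    rw [hid2]; nlinarith [sq_nonneg ((x*(1+p)+y*q) + (x^2+y^2)/2)]
  have he4 : (p + 1/2)^2 ≤ 3/62 := by nlinarith
  nlinarith [sq_nonneg ((p+1/2) + 1/2)]


lemma sqle (p q : ℝ) (h : p^2+q^2 = 1) : q^2 ≤ 1 := by nlinarith [sq_nonneg p]

lemma realkey (r p0 q0 P0 Q0 p1 q1 P1 Q1 p2 q2 P2 Q2 : ℝ)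
    (ha0 : p0^2+q0^2 = 1) (ha1 : p1^2+q1^2 = 1) (ha2 : p2^2+q2^2 = 1)
    (hb0 : P0^2+Q0^2 = 1) (hb1 : P1^2+Q1^2 = 1) (hb2 : P2^2+Q2^2 = 1)
    (hp : p0+p1+p2 = -r) (hq : q0+q1+q2 = 0)
    (hP : P0+P1+P2 = -r) (hQ : Q0+Q1+Q2 = 0)
    (hin : (p0*P0+q0*Q0) + (p1*P1+q1*Q1) + (p2*P2+q2*Q2) = -r)
    (hr1 : 1499/1000 ≤ r) (hr2 : r ≤ 3/2) : False := by
  have hT : ((p0+P0+1)^2+(q0+Q0)^2) + ((p1+P1+1)^2+(q1+Q1)^2)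
      + ((p2+P2+1)^2+(q2+Q2)^2) = 9 - 6*r := by
    linear_combination ha0 + ha1 + ha2 + hb0 + hb1 + hb2 + 2*hin + 2*hp + 2*hP
  have ht0 : (p0+P0+1)^2+(q0+Q0)^2 ≤ 3/500 := by
    linarith [sq_nonneg (p1+P1+1), sq_nonneg (q1+Q1), sq_nonneg (p2+P2+1), sq_nonneg (q2+Q2)]
  have ht1 : (p1+P1+1)^2+(q1+Q1)^2 ≤ 3/500 := by
    linarith [sq_nonneg (p0+P0+1), sq_nonneg (q0+Q0), sq_nonneg (p2+P2+1), sq_nonneg (q2+Q2)]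
  have ht2 : (p2+P2+1)^2+(q2+Q2)^2 ≤ 3/500 := by
    linarith [sq_nonneg (p0+P0+1), sq_nonneg (q0+Q0), sq_nonneg (p1+P1+1), sq_nonneg (q1+Q1)]
  have hi0 : p0 + 1/2 = (p0+P0+1)*(1+p0)+(q0+Q0)*q0 - ((p0+P0+1)^2+(q0+Q0)^2)/2 := by
    linear_combination hb0/2 - ha0/2
  have hi1 : p1 + 1/2 = (p1+P1+1)*(1+p1)+(q1+Q1)*q1 - ((p1+P1+1)^2+(q1+Q1)^2)/2 := by
    linear_combination hb1/2 - ha1/2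
  have hi2 : p2 + 1/2 = (p2+P2+1)*(1+p2)+(q2+Q2)*q2 - ((p2+P2+1)^2+(q2+Q2)^2)/2 := by
    linear_combination hb2/2 - ha2/2
  have l0 := onept' p0 q0 _ _ ha0 hi0 ht0
  have l1 := onept' p1 q1 _ _ ha1 hi1 ht1
  have l2 := onept' p2 q2 _ _ ha2 hi2 ht2
  have u0 : q0^2 ≤ 1 := sqle p0 q0 ha0
  have u1 : q1^2 ≤ 1 := sqle p1 q1 ha1
  have u2 : q2^2 ≤ 1 := sqle p2 q2 ha2
  exact tri q0 q1 q2 hq l0 l1 l2 u0 u1 u2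




/-- There is `0 < β₀ < 1/3` such that for every `β ∈ [β₀, 1/3]` there is no pair of
unimodular functions `u, v` on the four point space satisfying
`∫ u dμ = ∫ v dμ = ∫ u·conj(v) dμ = 0` for the measure giving mass `(1-β)/3` to the first
three points and `β` to the fourth. -/
theorem exists_beta0_no_orthonormal_pair :
    ∃ β₀ : ℝ, 0 < β₀ ∧ β₀ < 1 / 3 ∧
      ∀ β ∈ Set.Icc β₀ (1 / 3 : ℝ),
        ¬ ∃ u v : Fin 4 → ℂ,
            (∀ j, ‖u j‖ = 1) ∧
            (∀ j, ‖v j‖ = 1) ∧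
            ((1 - β : ℝ) : ℂ) / 3 * (u 0 + u 1 + u 2) + (β : ℂ) * u 3 = 0 ∧
            ((1 - β : ℝ) : ℂ) / 3 * (v 0 + v 1 + v 2) + (β : ℂ) * v 3 = 0 ∧
            ((1 - β : ℝ) : ℂ) / 3 *
                (u 0 * (starRingEnd ℂ) (v 0) + u 1 * (starRingEnd ℂ) (v 1)
                  + u 2 * (starRingEnd ℂ) (v 2))
              + (β : ℂ) * (u 3 * (starRingEnd ℂ) (v 3)) = 0 := by
  refine ⟨1499/4499, by norm_num, by norm_num, ?_⟩
  rintro β ⟨hβ1, hβ2⟩ ⟨u, v, hu, hv, h1, h2, h3⟩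

  set w : ℝ := (1 - β)/3 with hwdef
  have hw : 0 < w := by rw [hwdef]; linarith
  have hwc : ((w:ℝ):ℂ) ≠ 0 := Complex.ofReal_ne_zero.mpr hw.ne'
  have hW : ((1 - β : ℝ) : ℂ)/3 = ((w:ℝ):ℂ) := by rw [hwdef]; push_cast; ring
  have hu3 : u 3 * (starRingEnd ℂ) (u 3) = 1 := by
    rw [Complex.mul_conj, Complex.normSq_eq_norm_sq, hu 3]; norm_num
  have hv3 : v 3 * (starRingEnd ℂ) (v 3) = 1 := by
    rw [Complex.mul_conj, Complex.normSq_eq_norm_sq, hv 3]; norm_num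
  set A : Fin 4 → ℂ := fun j => u j * (starRingEnd ℂ) (u 3) with hA
  set B : Fin 4 → ℂ := fun j => v j * (starRingEnd ℂ) (v 3) with hB
  have h1' : ((w:ℝ):ℂ) * (A 0 + A 1 + A 2) + (β:ℂ) = 0 := by
    have e := mul_eq_zero_of_left h1 ((starRingEnd ℂ) (u 3))
    simp only [hA]
    linear_combination e - (β:ℂ) * hu3 - (u 0 + u 1 + u 2) * (starRingEnd ℂ) (u 3) * hW
  have h2' : ((w:ℝ):ℂ) * (B 0 + B 1 + B 2) + (β:ℂ) = 0 := by
    have e := mul_eq_zero_of_left h2 ((starRingEnd ℂ) (v 3))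
    simp only [hB]
    linear_combination e - (β:ℂ) * hv3 - (v 0 + v 1 + v 2) * (starRingEnd ℂ) (v 3) * hW
  have h3' : ((w:ℝ):ℂ) * (A 0 * (starRingEnd ℂ) (B 0) + A 1 * (starRingEnd ℂ) (B 1)
      + A 2 * (starRingEnd ℂ) (B 2)) + (β:ℂ) = 0 := by
    have e := mul_eq_zero_of_left h3 ((starRingEnd ℂ) (u 3) * v 3)
    simp only [hA, hB, map_mul, Complex.conj_conj]
    linear_combination e - (β:ℂ) * (v 3 * (starRingEnd ℂ) (v 3)) * hu3 - (β:ℂ) * hv3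
      - (u 0 * (starRingEnd ℂ) (v 0) + u 1 * (starRingEnd ℂ) (v 1)
          + u 2 * (starRingEnd ℂ) (v 2)) * ((starRingEnd ℂ) (u 3) * v 3) * hW
  have hSA : A 0 + A 1 + A 2 = ((-(β/w) : ℝ) : ℂ) := by
    apply mul_left_cancel₀ hwc
    rw [show ((w:ℝ):ℂ) * ((-(β/w):ℝ):ℂ) = -(β:ℂ) by
      push_cast; field_simp]
    linear_combination h1'
  have hSB : B 0 + B 1 + B 2 = ((-(β/w) : ℝ) : ℂ) := by
    apply mul_left_cancel₀ hwc
    rw [show ((w:ℝ):ℂ) * ((-(β/w):ℝ):ℂ) = -(β:ℂ) by push_cast; field_simp]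
    linear_combination h2'
  have hSAB : A 0 * (starRingEnd ℂ) (B 0) + A 1 * (starRingEnd ℂ) (B 1)
      + A 2 * (starRingEnd ℂ) (B 2) = ((-(β/w) : ℝ) : ℂ) := by
    apply mul_left_cancel₀ hwc
    rw [show ((w:ℝ):ℂ) * ((-(β/w):ℝ):ℂ) = -(β:ℂ) by push_cast; field_simp]
    linear_combination h3'
  -- norms
  have hnA : ∀ j, (A j).re^2 + (A j).im^2 = 1 := by
    intro j
    have h : ‖A j‖ = 1 := by
      simp only [hA]
      rw [norm_mul, Complex.norm_conj, hu j, hu 3]; norm_num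
    have h2 : Complex.normSq (A j) = 1 := by rw [← Complex.sq_norm, h]; norm_num
    rw [Complex.normSq_apply] at h2
    linear_combination h2
  have hnB : ∀ j, (B j).re^2 + (B j).im^2 = 1 := by
    intro j
    have h : ‖B j‖ = 1 := by
      simp only [hB]
      rw [norm_mul, Complex.norm_conj, hv j, hv 3]; norm_num
    have h2 : Complex.normSq (B j) = 1 := by rw [← Complex.sq_norm, h]; norm_num
    rw [Complex.normSq_apply] at h2
    linear_combination h2
  -- real components
  have hpr := congrArg Complex.re hSA
  have hqi := congrArg Complex.im hSA
  have hPr := congrArg Complex.re hSB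
  have hQi := congrArg Complex.im hSB
  have hir := congrArg Complex.re hSAB
  simp only [Complex.add_re, Complex.add_im, Complex.ofReal_re, Complex.ofReal_im,
    Complex.mul_re, Complex.conj_re, Complex.conj_im] at hpr hqi hPr hQi hir
  -- r bounds
  have hr2 : β/w ≤ 3/2 := by rw [div_le_iff₀ hw, hwdef]; linarith
  have hr1 : 1499/1000 ≤ β/w := by rw [le_div_iff₀ hw, hwdef]; linarith
  exact realkey (β/w) (A 0).re (A 0).im (B 0).re (B 0).im (A 1).re (A 1).im (B 1).re (B 1).im
    (A 2).re (A 2).im (B 2).re (B 2).im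
    (hnA 0) (hnA 1) (hnA 2) (hnB 0) (hnB 1) (hnB 2)
    (by linarith) (by linarith) (by linarith) (by linarith) (by linarith) hr1 hr2
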